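/- Let n ≥ 1, let Q be an n×n real symmetric positive definite matrix, let a_1, a_2 ∈ ℝ, and let A be the 2n×2n block matrix A = [[0, I_n], [−a_1 Q, −a_2 Q]]. Then A is stable (every eigenvalue of A over ℂ has strictly negative real part) if and only if a_1 > 0 and a_2 > 0. -/

import Mathlib

/-- Block matrix with `k × k` blocks, each an `n × n` real matrix. -/
def Mblk {k n : ℕ} (B : Fin k → Fin k → Matrix (Fin n) (Fin n) ℝ) :
    Matrix (Fin k × Fin n) (Fin k × Fin n) ℝ :=
  Matrix.of fun x y => B x.1 y.1 x.2 y.2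

open Matrix Polynomial

lemma mem_roots_charpoly_iff {m : Type*} [Fintype m] [DecidableEq m]
    (M : Matrix m m ℂ) (μ : ℂ) :
    μ ∈ M.charpoly.roots ↔ ∃ v, v ≠ 0 ∧ M *ᵥ v = μ • v := by
  have hev : M.charpoly.eval μ = (μ • (1 : Matrix m m ℂ) - M).det := by
    rw [Matrix.charpoly, ← Polynomial.coe_evalRingHom, RingHom.map_det]
    congr 1
    ext i j
    by_cases h : i = j <;>
      simp [Matrix.charmatrix_apply, Matrix.one_apply, Matrix.diagonal_apply, h]
  rw [Polynomial.mem_roots M.charpoly_monic.ne_zero, Polynomial.IsRoot, hev,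
    ← Matrix.exists_mulVec_eq_zero_iff]
  constructor
  · rintro ⟨v, hv, h⟩
    refine ⟨v, hv, ?_⟩
    rw [Matrix.sub_mulVec, Matrix.smul_mulVec, Matrix.one_mulVec, sub_eq_zero] at h
    exact h.symm
  · rintro ⟨v, hv, h⟩
    refine ⟨v, hv, ?_⟩
    rw [Matrix.sub_mulVec, Matrix.smul_mulVec, Matrix.one_mulVec, sub_eq_zero, h]


variable {n : ℕ} (Q : Matrix (Fin n) (Fin n) ℝ) (a₁ a₂ : ℝ)

lemma mulVec_blk0 (v : Fin 2 × Fin n → ℂ) (k : Fin n) :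
    (((Mblk ![![0, 1], ![-(a₁ • Q), -(a₂ • Q)]]).map Complex.ofReal) *ᵥ v) (0, k)
      = v (1, k) := by
  simp [Mblk, Matrix.mulVec, dotProduct, Fintype.sum_prod_type, Fin.sum_univ_two,
    Matrix.one_apply, apply_ite]

lemma mulVec_blk1 (v : Fin 2 × Fin n → ℂ) (k : Fin n) :
    (((Mblk ![![0, 1], ![-(a₁ • Q), -(a₂ • Q)]]).map Complex.ofReal) *ᵥ v) (1, k)
      = -((a₁ : ℂ) * ((Q.map Complex.ofReal *ᵥ fun l => v (0, l)) k))
        - (a₂ : ℂ) * ((Q.map Complex.ofReal *ᵥ fun l => v (1, l)) k) := by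
  simp [Mblk, Matrix.mulVec, dotProduct, Fintype.sum_prod_type, Fin.sum_univ_two,
    Finset.mul_sum, mul_comm, mul_assoc, mul_left_comm]
  ring

lemma eig_iff (μ : ℂ) :
    (∃ v, v ≠ 0 ∧ ((Mblk ![![0, 1], ![-(a₁ • Q), -(a₂ • Q)]]).map Complex.ofReal) *ᵥ v = μ • v)
      ↔ ∃ x : Fin n → ℂ, x ≠ 0 ∧
        ((a₁ : ℂ) + (a₂ : ℂ) * μ) • ((Q.map Complex.ofReal) *ᵥ x) + (μ ^ 2) • x = 0 := by
  constructor
  · rintro ⟨v, hv, hAv⟩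
    set x : Fin n → ℂ := fun l => v (0, l) with hxdef
    set y : Fin n → ℂ := fun l => v (1, l) with hydef
    have h0 : ∀ k, v (1, k) = μ * v (0, k) := by
      intro k
      have h := congr_fun hAv (0, k)
      rw [mulVec_blk0] at h
      simpa using h
    have h1 : ∀ k, -((a₁:ℂ) * ((Q.map Complex.ofReal *ᵥ x) k))
        - (a₂:ℂ) * ((Q.map Complex.ofReal *ᵥ y) k) = μ * v (1, k) := by
      intro k
      have h := congr_fun hAv (1, k)
      rw [mulVec_blk1] at h
      simpa using h
    have hx : x ≠ 0 := by
      intro h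
      apply hv
      funext p
      obtain ⟨j, l⟩ := p
      fin_cases j
      · exact congr_fun h l
      · show v (1, l) = 0
        rw [h0 l, show v (0, l) = 0 from congr_fun h l, mul_zero]
    refine ⟨x, hx, ?_⟩
    have hy : y = μ • x := by funext l; exact h0 l
    funext k
    have h := h1 k
    rw [hy, Matrix.mulVec_smul, h0 k] at h
    have hxk : v (0, k) = x k := rfl
    rw [hxk] at h
    simp only [Pi.add_apply, Pi.smul_apply, Pi.zero_apply, smul_eq_mul] at h ⊢
    linear_combination -h
  · rintro ⟨x, hx, hequ⟩
    set vv : Fin 2 × Fin n → ℂ := fun p => if p.1 = 0 then x p.2 else μ * x p.2 with hvv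
    refine ⟨vv, ?_, ?_⟩
    · intro h
      apply hx
      funext l
      simpa [hvv] using congr_fun h (0, l)
    · funext p
      obtain ⟨j, k⟩ := p
      have hq := congr_fun hequ k
      simp only [Pi.add_apply, Pi.smul_apply, Pi.zero_apply, smul_eq_mul] at hq
      fin_cases j
      · show ((Mblk ![![0, 1], ![-(a₁ • Q), -(a₂ • Q)]]).map Complex.ofReal *ᵥ vv) (0, k)
          = (μ • vv) (0, k)
        rw [mulVec_blk0]
        simp [hvv]
      · show ((Mblk ![![0, 1], ![-(a₁ • Q), -(a₂ • Q)]]).map Complex.ofReal *ᵥ vv) (1, k)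
          = (μ • vv) (1, k)
        rw [mulVec_blk1]
        have e0 : (fun l => vv (0, l)) = x := by funext l; simp [hvv]
        have e1 : (fun l => vv (1, l)) = μ • x := by funext l; simp [hvv]
        rw [e0, e1, Matrix.mulVec_smul]
        simp only [Pi.smul_apply, smul_eq_mul, hvv]
        norm_num
        linear_combination -hq

lemma dot_ofReal (u w : Fin n → ℝ) :
    (fun k => ((u k : ℝ) : ℂ)) ⬝ᵥ (fun k => ((w k : ℝ) : ℂ)) = ((u ⬝ᵥ w : ℝ) : ℂ) := by
  simp [dotProduct]

lemma mulVec_ofReal (u : Fin n → ℝ) :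
    Q.map Complex.ofReal *ᵥ (fun k => ((u k : ℝ) : ℂ)) = fun k => (((Q *ᵥ u) k : ℝ) : ℂ) := by
  funext k
  simp [Matrix.mulVec, dotProduct]

lemma dot_self_pos {z : Fin n → ℝ} (hz : z ≠ 0) : 0 < z ⬝ᵥ z := by
  obtain ⟨k, hk⟩ := Function.ne_iff.mp hz
  have hk' : z k ≠ 0 := by simpa using hk
  exact Finset.sum_pos' (fun i _ => mul_self_nonneg _)
    ⟨k, Finset.mem_univ k, mul_self_pos.mpr hk'⟩

lemma stable_of_pos (hQ : Q.PosDef) (ha₁ : 0 < a₁) (ha₂ : 0 < a₂) {μ : ℂ}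
    (hx0 : ∃ x : Fin n → ℂ, x ≠ 0 ∧
      ((a₁ : ℂ) + (a₂ : ℂ) * μ) • ((Q.map Complex.ofReal) *ᵥ x) + (μ ^ 2) • x = 0) :
    μ.re < 0 := by
  obtain ⟨x, hx, heq⟩ := hx0
  set u : Fin n → ℝ := fun k => (x k).re with hu
  set w : Fin n → ℝ := fun k => (x k).im with hw
  set xu : Fin n → ℂ := fun k => ((u k : ℝ) : ℂ) with hxu
  set xw : Fin n → ℂ := fun k => ((w k : ℝ) : ℂ) with hxw
  have hxd : x = xu + Complex.I • xw := by
    funext k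
    simp [hxu, hxw, hu, hw, Complex.ext_iff, mul_comm]
  have hstar : star x = xu - Complex.I • xw := by
    funext k
    simp [hxu, hxw, hu, hw, Complex.ext_iff, mul_comm]
  -- symmetry of Q
  have hQt : Qᵀ = Q := hQ.1
  have hsym : u ⬝ᵥ (Q *ᵥ w) = w ⬝ᵥ (Q *ᵥ u) := by
    rw [Matrix.dotProduct_mulVec, ← Matrix.mulVec_transpose, hQt, dotProduct_comm]
  set P : ℝ := u ⬝ᵥ (Q *ᵥ u) + w ⬝ᵥ (Q *ᵥ w) with hP
  set S : ℝ := u ⬝ᵥ u + w ⬝ᵥ w with hS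
  have hp : star x ⬝ᵥ (Q.map Complex.ofReal *ᵥ x) = (P : ℂ) := by
    rw [hstar, hxd, Matrix.mulVec_add, Matrix.mulVec_smul, hxu, hxw,
      mulVec_ofReal, mulVec_ofReal]
    simp only [sub_dotProduct, dotProduct_add, smul_dotProduct,
      dotProduct_smul, smul_eq_mul]
    rw [dot_ofReal, dot_ofReal, dot_ofReal, dot_ofReal, hsym, hP]
    push_cast
    ring_nf
    simp [Complex.I_sq]
  have hs : star x ⬝ᵥ x = (S : ℂ) := by
    rw [hstar, hxd]
    simp only [sub_dotProduct, dotProduct_add, smul_dotProduct,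
      dotProduct_smul, smul_eq_mul]
    rw [dot_ofReal, dot_ofReal, dot_ofReal, dot_ofReal, dotProduct_comm w u, hS]
    push_cast
    ring_nf
    simp [Complex.I_sq]
  -- positivity
  have huw : u ≠ 0 ∨ w ≠ 0 := by
    by_contra hc
    push_neg at hc
    apply hx
    funext k
    have h1 : (x k).re = 0 := congr_fun hc.1 k
    have h2 : (x k).im = 0 := congr_fun hc.2 k
    exact Complex.ext h1 h2
  have hq_nonneg : ∀ z : Fin n → ℝ, 0 ≤ z ⬝ᵥ (Q *ᵥ z) := fun z => by
    simpa using hQ.posSemidef.dotProduct_mulVec_nonneg z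
  have hq_pos : ∀ z : Fin n → ℝ, z ≠ 0 → 0 < z ⬝ᵥ (Q *ᵥ z) := fun z hz => by
    simpa using hQ.dotProduct_mulVec_pos hz
  have hPpos : 0 < P := by
    rcases huw with h | h
    · exact add_pos_of_pos_of_nonneg (hq_pos u h) (hq_nonneg w)
    · exact add_pos_of_nonneg_of_pos (hq_nonneg u) (hq_pos w h)
  have hSpos : 0 < S := by
    rcases huw with h | h
    · exact add_pos_of_pos_of_nonneg (dot_self_pos h) (Finset.sum_nonneg fun i _ => mul_self_nonneg _)
    · exact add_pos_of_nonneg_of_pos (Finset.sum_nonneg fun i _ => mul_self_nonneg _) (dot_self_pos h)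
  -- dot the equation with star x
  have hE : ((a₁ : ℂ) + (a₂ : ℂ) * μ) * (P : ℂ) + μ ^ 2 * (S : ℂ) = 0 := by
    have := congr_arg (fun v => star x ⬝ᵥ v) heq
    simpa only [dotProduct_add, dotProduct_smul, smul_eq_mul,
      dotProduct_zero, hp, hs] using this
  -- real and imaginary parts
  have hre := congr_arg Complex.re hE
  have him := congr_arg Complex.im hE
  simp only [Complex.add_re, Complex.add_im, Complex.mul_re, Complex.mul_im,
    Complex.ofReal_re, Complex.ofReal_im, Complex.zero_re, Complex.zero_im,
    Complex.one_re, Complex.one_im, pow_two, mul_zero, zero_mul, add_zero,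
    sub_zero, zero_sub, zero_add] at hre him
  by_contra hcon
  push_neg at hcon
  have hmi : μ.im = 0 := by
    have hfac : μ.im * (a₂ * P + 2 * μ.re * S) = 0 := by linear_combination him
    have : a₂ * P + 2 * μ.re * S > 0 := by positivity
    exact (mul_eq_zero.mp hfac).resolve_right this.ne'
  rw [hmi] at hre
  nlinarith [mul_pos ha₁ hPpos, mul_nonneg (mul_nonneg ha₂.le hcon) hPpos.le,
    mul_nonneg (mul_nonneg hcon hcon) hSpos.le]

/-- Second-order stability: `A = [[0, I], [-a₁Q, -a₂Q]]` is stable (all complex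
eigenvalues have negative real part) iff `a₁ > 0` and `a₂ > 0`. -/
theorem secondOrder_stable_iff (n : ℕ) (hn : 1 ≤ n)
    (Q : Matrix (Fin n) (Fin n) ℝ) (hQ : Q.PosDef) (a₁ a₂ : ℝ) :
    (∀ μ ∈ (((Mblk ![![0, 1], ![-(a₁ • Q), -(a₂ • Q)]]).map
        Complex.ofReal).charpoly).roots, μ.re < 0) ↔ (0 < a₁ ∧ 0 < a₂) := by
  constructor
  · intro h
    -- get a positive eigenvalue of Q with eigenvector
    set i0 : Fin n := ⟨0, hn⟩ with hi0
    set lam : ℝ := hQ.1.eigenvalues i0 with hlamdef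
    have hlam : 0 < lam := hQ.eigenvalues_pos i0
    set wv : Fin n → ℝ := ⇑(hQ.1.eigenvectorBasis i0) with hwv
    have hQwv : Q *ᵥ wv = lam • wv := hQ.1.mulVec_eigenvectorBasis i0
    have hwv0 : wv ≠ 0 := by
      intro hc
      apply hQ.1.eigenvectorBasis.orthonormal.ne_zero i0
      ext k
      exact congr_fun hc k
    set x : Fin n → ℂ := fun k => ((wv k : ℝ) : ℂ) with hx
    have hx0 : x ≠ 0 := by
      intro hc
      apply hwv0
      funext k
      have h1 : (wv k : ℂ) = 0 := congr_fun hc k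
      exact_mod_cast h1
    have hQx : Q.map Complex.ofReal *ᵥ x = (lam : ℂ) • x := by
      rw [hx, mulVec_ofReal, hQwv]
      funext k
      simp
    -- any root of z² + a₂ lam z + a₁ lam has negative real part
    have key : ∀ μ : ℂ, μ ^ 2 + (a₂ * lam : ℝ) * μ + (a₁ * lam : ℝ) = 0 → μ.re < 0 := by
      intro μ hμ
      apply h
      rw [mem_roots_charpoly_iff, eig_iff]
      refine ⟨x, hx0, ?_⟩
      rw [hQx]
      funext k
      simp only [Pi.add_apply, Pi.smul_apply, smul_eq_mul, Pi.zero_apply]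
      have : ((a₂ : ℂ) * (lam : ℂ)) * μ + (a₁ : ℂ) * (lam : ℂ) + μ ^ 2 = 0 := by
        push_cast at hμ
        linear_combination hμ
      linear_combination (x k) * this
    obtain ⟨d, hd⟩ := IsAlgClosed.exists_pow_nat_eq
      (((a₂ * lam : ℝ) : ℂ) ^ 2 - 4 * ((a₁ * lam : ℝ) : ℂ)) (two_pos)
    set b : ℝ := a₂ * lam with hb
    set c : ℝ := a₁ * lam with hc
    set r : ℂ := (-(b : ℂ) + d) / 2 with hr
    set s : ℂ := (-(b : ℂ) - d) / 2 with hs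
    have hrr : r ^ 2 + (b : ℝ) * r + (c : ℝ) = 0 := by
      rw [hr]
      linear_combination hd / 4
    have hss : s ^ 2 + (b : ℝ) * s + (c : ℝ) = 0 := by
      rw [hs]
      linear_combination hd / 4
    have hr' : r.re < 0 := key r hrr
    have hs' : s.re < 0 := key s hss
    have hsum : r + s = -(b : ℂ) := by rw [hr, hs]; ring
    have hprod : r * s = (c : ℂ) := by
      rw [hr, hs]
      linear_combination -hd / 4
    have hbpos : 0 < b := by
      have h1 : (r + s).re = -b := by rw [hsum]; simp
      simp only [Complex.add_re] at h1
      linarith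
    have him : s.im = -r.im := by
      have h1 : (r + s).im = 0 := by rw [hsum]; simp
      simp only [Complex.add_im] at h1
      linarith
    have hcpos : 0 < c := by
      have h1 : (r * s).re = c := by rw [hprod]; simp
      rw [Complex.mul_re, him] at h1
      nlinarith [mul_pos (neg_pos.mpr hr') (neg_pos.mpr hs'), sq_nonneg r.im]
    constructor
    · nlinarith
    · nlinarith
  · rintro ⟨ha₁, ha₂⟩ μ hμ
    rw [mem_roots_charpoly_iff, eig_iff] at hμ
    exact stable_of_pos Q a₁ a₂ hQ ha₁ ha₂ hμ
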